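/- Let H be a real n×n matrix with nonnegative off-diagonal entries and each column summing to zero. Then e^{tH} is a stochastic matrix for all t ≥ 0: its entries are nonnegative and each column sums to one. -/

import Mathlib

open NormedSpace

attribute [local instance] Matrix.linftyOpNormedRing Matrix.linftyOpNormedAlgebra

section aux

attribute [local instance] Matrix.linftyOpNormedAddCommGroup

lemma exp_entry_hasSum {n : ℕ} (M : Matrix (Fin n) (Fin n) ℝ) (i j : Fin n) :
    HasSum (fun k : ℕ => ((k.factorial : ℝ)⁻¹ • M ^ k) i j) (exp M i j) := by
  have h := exp_series_hasSum_exp' (𝕂 := ℝ) M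
  let L : Matrix (Fin n) (Fin n) ℝ →ₗ[ℝ] ℝ :=
    { toFun := fun A => A i j
      map_add' := fun A B => rfl
      map_smul' := fun c A => rfl }
  exact h.map L.toAddMonoidHom L.continuous_of_finiteDimensional

lemma pow_entry_nonneg {n : ℕ} {A : Matrix (Fin n) (Fin n) ℝ}
    (hA : ∀ i j, 0 ≤ A i j) (k : ℕ) : ∀ i j, 0 ≤ (A ^ k) i j := by
  induction k with
  | zero => intro i j; simp [Matrix.one_apply]; positivity
  | succ k ih =>
      intro i j
      rw [pow_succ, Matrix.mul_apply]
      exact Finset.sum_nonneg fun l _ => mul_nonneg (ih i l) (hA l j)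

lemma exp_entry_nonneg {n : ℕ} {A : Matrix (Fin n) (Fin n) ℝ}
    (hA : ∀ i j, 0 ≤ A i j) (i j : Fin n) : 0 ≤ exp A i j := by
  refine (exp_entry_hasSum A i j).nonneg fun k => ?_
  simp only [Matrix.smul_apply, smul_eq_mul]
  exact mul_nonneg (by positivity) (pow_entry_nonneg hA k i j)

lemma pow_colsum {n : ℕ} {H : Matrix (Fin n) (Fin n) ℝ}
    (hcol : ∀ j, ∑ i, H i j = 0) (k : ℕ) :
    ∀ j, ∑ i, (H ^ k) i j = if k = 0 then 1 else 0 := by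
  induction k with
  | zero => intro j; simp [Matrix.one_apply, Finset.sum_ite_eq]
  | succ k ih =>
      intro j
      simp only [Nat.succ_ne_zero, if_false]
      rw [pow_succ]
      simp only [Matrix.mul_apply]
      rw [Finset.sum_comm]
      simp_rw [← Finset.sum_mul, ih]
      split_ifs with h
      · simpa using hcol j
      · simp

end aux

/-- An infinitesimal stochastic matrix (nonnegative off-diagonal entries, columns summing
to zero) generates a stochastic semigroup: `e^{tH}` has nonnegative entries and each
column sums to one, for every `t ≥ 0`. -/
theorem exp_Qmatrix_stochastic {n : ℕ} (H : Matrix (Fin n) (Fin n) ℝ)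
    (hoff : ∀ i j, i ≠ j → 0 ≤ H i j) (hcol : ∀ j, ∑ i, H i j = 0) :
    ∀ t : ℝ, 0 ≤ t →
      (∀ i j, 0 ≤ exp (t • H) i j) ∧ (∀ j, ∑ i, exp (t • H) i j = 1) := by
  intro t ht
  set M : Matrix (Fin n) (Fin n) ℝ := t • H with hM
  constructor
  · -- nonnegativity
    intro i j
    set c : ℝ := ∑ i, |M i i| with hc
    have hcn : ∀ i, -M i i ≤ c := by
      intro i
      have h1 : |M i i| ≤ c :=
        Finset.single_le_sum (f := fun i => |M i i|) (fun i _ => abs_nonneg _)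
          (Finset.mem_univ i)
      linarith [neg_abs_le (M i i)]
    set A : Matrix (Fin n) (Fin n) ℝ := M + c • (1 : Matrix (Fin n) (Fin n) ℝ) with hA
    have hAnn : ∀ i j, 0 ≤ A i j := by
      intro i j
      by_cases h : i = j
      · subst h
        simp only [hA, Matrix.add_apply, Matrix.smul_apply, Matrix.one_apply_eq, smul_eq_mul,
          mul_one]
        linarith [hcn i]
      · simp only [hA, Matrix.add_apply, Matrix.smul_apply, Matrix.one_apply_ne h, smul_eq_mul,
          mul_zero, add_zero]
        exact mul_nonneg ht (hoff i j h)
    have hMA : M = (-c) • (1 : Matrix (Fin n) (Fin n) ℝ) + A := by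
      rw [hA]; ring_nf; rw [neg_smul]; abel
    have hcomm : Commute ((-c) • (1 : Matrix (Fin n) (Fin n) ℝ)) A :=
      (Commute.one_left A).smul_left _
    have hsplit : exp M = exp ((-c) • (1 : Matrix (Fin n) (Fin n) ℝ)) * exp A := by
      rw [hMA]; exact Matrix.exp_add_of_commute _ _ hcomm
    have hone : exp ((-c) • (1 : Matrix (Fin n) (Fin n) ℝ))
        = Real.exp (-c) • (1 : Matrix (Fin n) (Fin n) ℝ) := by
      have halg : (-c) • (1 : Matrix (Fin n) (Fin n) ℝ)
          = algebraMap ℝ (Matrix (Fin n) (Fin n) ℝ) (-c) := by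
        rw [Algebra.algebraMap_eq_smul_one]
      rw [halg]
      have hx := algebraMap_exp_comm (𝕂 := ℝ) (𝔸 := Matrix (Fin n) (Fin n) ℝ) (-c)
      rw [Real.exp_eq_exp_ℝ, ← Algebra.algebraMap_eq_smul_one]
      exact hx.symm
    rw [hsplit, hone]
    rw [Matrix.smul_mul, Matrix.one_mul, Matrix.smul_apply, smul_eq_mul]
    exact mul_nonneg (Real.exp_pos _).le (exp_entry_nonneg hAnn i j)
  · -- column sums
    intro j
    have hMcol : ∀ j, ∑ i, M i j = 0 := by
      intro j
      simp only [hM, Matrix.smul_apply, smul_eq_mul, ← Finset.mul_sum, hcol j, mul_zero]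
    have hs : HasSum (fun k : ℕ => ∑ i, ((k.factorial : ℝ)⁻¹ • M ^ k) i j)
        (∑ i, exp M i j) :=
      hasSum_sum fun i _ => exp_entry_hasSum M i j
    have heq : (fun k : ℕ => ∑ i, ((k.factorial : ℝ)⁻¹ • M ^ k) i j)
        = fun k : ℕ => if k = 0 then (1 : ℝ) else 0 := by
      funext k
      simp only [Matrix.smul_apply, smul_eq_mul, ← Finset.mul_sum]
      rw [pow_colsum hMcol k j]
      split <;> simp_all
    rw [heq] at hs
    have h1 : HasSum (fun k : ℕ => if k = 0 then (1 : ℝ) else 0) 1 := by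
      have := hasSum_ite_eq (0 : ℕ) (1 : ℝ)
      simpa [eq_comm] using this
    exact hs.unique h1
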